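/- The PPL-difference sequence d_pf of the paperfolding word u_pf is 2-automatic: the 2-kernel of d_pf is a finite set. -/

import Mathlib

/-- Prefix `u[0..n-1]` of the infinite word `u`. -/
def wordPrefix {A : Type*} (u : ℕ → A) (n : ℕ) : List A :=
  List.ofFn (fun i : Fin n => u i)

/-- Factor `u[i..i+ℓ-1]` of the infinite word `u`. -/
def wordFactor {A : Type*} (u : ℕ → A) (i ℓ : ℕ) : List A :=
  List.ofFn (fun j : Fin ℓ => u (i + j))

/-- A palindrome is a word equal to its reversal. -/
def IsPalindrome {A : Type*} (w : List A) : Prop := w.reverse = w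

/-- `w` is a concatenation of `k` nonempty palindromes. -/
def IsPalConcat {A : Type*} (w : List A) (k : ℕ) : Prop :=
  ∃ ps : List (List A), ps.length = k ∧ (∀ p ∈ ps, p ≠ [] ∧ IsPalindrome p) ∧ ps.flatten = w

/-- Prefix palindromic length: the least number of nonempty palindromes whose
concatenation is the prefix of length `n` of `u` (`PPL u 0 = 0`). -/
noncomputable def PPL {A : Type*} (u : ℕ → A) (n : ℕ) : ℕ :=
  sInf {k | IsPalConcat (wordPrefix u n) k}

/-- The PPL-difference sequence `d_u(n) = PPL_u(n+1) - PPL_u(n)`. -/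
noncomputable def PPLdiff {A : Type*} (u : ℕ → A) (n : ℕ) : ℤ :=
  (PPL u (n + 1) : ℤ) - (PPL u n : ℤ)

/-- The `k`-kernel of a sequence `x`: all subsequences `(x (k^e * n + b))_n` with `b < k^e`. -/
def kernelSeq {S : Type*} (k : ℕ) (x : ℕ → S) : Set (ℕ → S) :=
  {y | ∃ e b : ℕ, b < k ^ e ∧ y = fun n => x (k ^ e * n + b)}

/-- The fixed point starting with `a` of the 2-uniform morphism sending each letter
`x` to the two-letter word `mu x` (assuming `(mu a).1 = a`):
the unique infinite word `w` with `w 0 = a`, `w (2n) = (mu (w n)).1`,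
`w (2n+1) = (mu (w n)).2`. -/
def fixedPoint2 {A : Type*} (mu : A → A × A) (a : A) : ℕ → A
  | 0 => a
  | n + 1 =>
    if (n + 1) % 2 = 0 then (mu (fixedPoint2 mu a ((n + 1) / 2))).1
    else (mu (fixedPoint2 mu a ((n + 1) / 2))).2
termination_by n => n
decreasing_by all_goals exact Nat.div_lt_self (Nat.succ_pos n) one_lt_two

/-- The morphism `φ_pf` on `{a, b, c, d}` (encoded as `0, 1, 2, 3`):
`a ↦ ab`, `b ↦ cb`, `c ↦ ad`, `d ↦ cd`. -/
def phiPF : Fin 4 → Fin 4 × Fin 4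
  | 0 => (0, 1)
  | 1 => (2, 1)
  | 2 => (0, 3)
  | 3 => (2, 3)

/-- The fixed point `v = φ_pf^ω(a)`. -/
def vPF : ℕ → Fin 4 := fixedPoint2 phiPF 0

/-- The coding `ψ : a, b ↦ 0`, `c, d ↦ 1`. -/
def codingPF (x : Fin 4) : Fin 2 := if (x : ℕ) < 2 then 0 else 1

/-- The paperfolding word `u_pf = ψ(φ_pf^ω(a)) = 0010011000110110⋯`. -/
def paperfolding (n : ℕ) : Fin 2 := codingPF (vPF n)

section Sec1

lemma vPF_zero : vPF 0 = 0 := by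
  show fixedPoint2 phiPF 0 0 = 0
  rw [fixedPoint2]

lemma vPF_even (k : ℕ) : vPF (2 * k) = (phiPF (vPF k)).1 := by
  rcases k with _ | m
  · rw [show 2 * 0 = 0 by norm_num, vPF_zero]; rfl
  · show fixedPoint2 phiPF 0 (2 * (m+1)) = _
    rw [show 2 * (m + 1) = (2 * m + 1) + 1 by ring, fixedPoint2]
    rw [if_pos (by omega : (2 * m + 1 + 1) % 2 = 0),
      show (2 * m + 1 + 1) / 2 = m + 1 by omega]
    rfl

lemma vPF_odd (k : ℕ) : vPF (2 * k + 1) = (phiPF (vPF k)).2 := by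
  show fixedPoint2 phiPF 0 (2 * k + 1) = _
  rw [fixedPoint2]
  rw [if_neg (by omega : ¬ (2 * k + 1) % 2 = 0), show (2 * k + 1) / 2 = k by omega]
  rfl

lemma u_odd (k : ℕ) : paperfolding (2 * k + 1) = paperfolding k := by
  unfold paperfolding
  rw [vPF_odd]
  generalize vPF k = x
  fin_cases x <;> decide

lemma u_4k (k : ℕ) : paperfolding (4 * k) = 0 := by
  unfold paperfolding
  rw [show (4:ℕ) * k = 2 * (2 * k) by ring, vPF_even, vPF_even]
  generalize vPF k = x
  fin_cases x <;> decide

lemma u_4k2 (k : ℕ) : paperfolding (4 * k + 2) = 1 := by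
  unfold paperfolding
  rw [show (4:ℕ) * k + 2 = 2 * (2 * k + 1) by ring, vPF_even, vPF_odd]
  generalize vPF k = x
  fin_cases x <;> decide

lemma u_even_val (m : ℕ) : paperfolding (2 * m) = if m % 2 = 0 then 0 else 1 := by
  rcases Nat.even_or_odd m with ⟨j, hj⟩ | ⟨j, hj⟩
  · subst hj
    rw [show 2 * (j + j) = 4 * j by ring, u_4k, if_pos (by omega : (j + j) % 2 = 0)]
  · subst hj
    rw [show 2 * (2 * j + 1) = 4 * j + 2 by ring, u_4k2,
      if_neg (by omega : ¬ (2 * j + 1) % 2 = 0)]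

lemma u_even_step (m : ℕ) : paperfolding (2 * m) ≠ paperfolding (2 * m + 2) := by
  rw [show 2 * m + 2 = 2 * (m + 1) by ring, u_even_val, u_even_val]
  rcases (by omega : m % 2 = 0 ∨ m % 2 = 1) with h | h
  · rw [if_pos h, if_neg (by omega : ¬ (m+1) % 2 = 0)]; decide
  · rw [if_neg (by omega : ¬ m % 2 = 0), if_pos (by omega : (m+1) % 2 = 0)]; decide

lemma fin2_trans {a b c : Fin 2} (h1 : a ≠ b) (h2 : b ≠ c) : a = c := by
  fin_cases a <;> fin_cases b <;> fin_cases c <;> simp_all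

lemma no_alt4 (n : ℕ) :
    ¬ (paperfolding n ≠ paperfolding (n+1) ∧ paperfolding (n+1) ≠ paperfolding (n+2) ∧
       paperfolding (n+2) ≠ paperfolding (n+3)) := by
  rintro ⟨h1, h2, h3⟩
  rcases Nat.even_or_odd n with ⟨m, hm⟩ | ⟨m, hm⟩
  · have hm2 : n = 2 * m := by omega
    subst hm2
    exact u_even_step m (fin2_trans h1 h2)
  · subst hm
    apply u_even_step (m+1)
    convert fin2_trans h2 h3 using 2 <;> omega

end Sec1

section Sec2

/-- `u[i..i+ℓ-1]` is a palindrome. -/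
def PalFac (i ℓ : ℕ) : Prop :=
  ∀ j, j < ℓ → paperfolding (i + j) = paperfolding (i + (ℓ - 1 - j))

instance (i ℓ : ℕ) : Decidable (PalFac i ℓ) := Nat.decidableBallLT ℓ _

lemma no_pal8 (m : ℕ) : ¬ PalFac m 8 := by
  intro h
  rcases Nat.even_or_odd m with ⟨s, hs⟩ | ⟨s, hs⟩
  · -- m = 2s : odd j = 2t+1 : u(s+t) = u(m + 6 - 2t) = u(2(s+3-t))
    have key : ∀ t, t < 4 → paperfolding (s + t) = paperfolding (2 * (s + 3 - t)) := by
      intro t ht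
      have h1 := h (2*t+1) (by omega)
      rw [show m + (2*t+1) = 2 * (s + t) + 1 by omega, u_odd] at h1
      rw [h1]
      congr 1
      omega
    apply no_alt4 s
    refine ⟨?_, ?_, ?_⟩
    · have k0 := key 0 (by omega)
      rw [Nat.add_zero] at k0
      rw [k0, key 1 (by omega), show s + 3 - 0 = (s+2) + 1 by omega,
        show (2:ℕ) * ((s+2)+1) = 2 * (s+2) + 2 by ring, show s + 3 - 1 = s + 2 by omega]
      exact (u_even_step (s+2)).symm
    · rw [show s + 1 + 1 = s + 2 from rfl, key 1 (by omega), key 2 (by omega),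
        show s + 3 - 1 = (s+1) + 1 by omega,
        show (2:ℕ) * ((s+1)+1) = 2 * (s+1) + 2 by ring, show s + 3 - 2 = s + 1 by omega]
      exact (u_even_step (s+1)).symm
    · rw [show s + 2 + 1 = s + 3 from rfl, key 2 (by omega), key 3 (by omega),
        show s + 3 - 2 = s + 1 by omega,
        show (2:ℕ) * (s+1) = 2 * s + 2 by ring, show s + 3 - 3 = s by omega]
      exact (u_even_step s).symm
  · -- m = 2s+1 : even j = 2t : u(s+t) = u(m + 7 - 2t) = u(2(s+4-t))
    have key : ∀ t, t < 4 → paperfolding (s + t) = paperfolding (2 * (s + 4 - t)) := by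
      intro t ht
      have h1 := h (2*t) (by omega)
      rw [show m + 2*t = 2 * (s + t) + 1 by omega, u_odd] at h1
      rw [h1]
      congr 1
      omega
    apply no_alt4 s
    refine ⟨?_, ?_, ?_⟩
    · have k0 := key 0 (by omega)
      rw [Nat.add_zero] at k0
      rw [k0, key 1 (by omega), show s + 4 - 0 = (s+3) + 1 by omega,
        show (2:ℕ) * ((s+3)+1) = 2 * (s+3) + 2 by ring, show s + 4 - 1 = s + 3 by omega]
      exact (u_even_step (s+3)).symm
    · rw [show s + 1 + 1 = s + 2 from rfl, key 1 (by omega), key 2 (by omega),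
        show s + 4 - 1 = (s+2) + 1 by omega,
        show (2:ℕ) * ((s+2)+1) = 2 * (s+2) + 2 by ring, show s + 4 - 2 = s + 2 by omega]
      exact (u_even_step (s+2)).symm
    · rw [show s + 2 + 1 = s + 3 from rfl, key 2 (by omega), key 3 (by omega),
        show s + 4 - 2 = (s+1) + 1 by omega,
        show (2:ℕ) * ((s+1)+1) = 2 * (s+1) + 2 by ring, show s + 4 - 3 = s + 1 by omega]
      exact (u_even_step (s+1)).symm

lemma no_pal14 (i : ℕ) : ¬ PalFac i 14 := by
  intro h
  rcases Nat.even_or_odd i with ⟨m, hm⟩ | ⟨m, hm⟩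
  · -- i = 2m : j = 2t : u(2(m+t)) = u(2m+13-2t) = u(m+6-t) ; r = 6-t
    have key : ∀ r, r < 4 → paperfolding (m + r) = paperfolding (2 * (m + 6 - r)) := by
      intro r hr
      have h1 := h (2*(6-r)) (by omega)
      rw [show i + 2*(6-r) = 2 * (m + 6 - r) by omega,
        show i + (14 - 1 - 2*(6-r)) = 2 * (m + r) + 1 by omega, u_odd] at h1
      exact h1.symm
    apply no_alt4 m
    refine ⟨?_, ?_, ?_⟩
    · have k0 := key 0 (by omega)
      rw [Nat.add_zero] at k0
      rw [k0, key 1 (by omega), show m + 6 - 0 = (m+5) + 1 by omega,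
        show (2:ℕ) * ((m+5)+1) = 2 * (m+5) + 2 by ring, show m + 6 - 1 = m + 5 by omega]
      exact (u_even_step (m+5)).symm
    · rw [show m + 1 + 1 = m + 2 from rfl, key 1 (by omega), key 2 (by omega),
        show m + 6 - 1 = (m+4) + 1 by omega,
        show (2:ℕ) * ((m+4)+1) = 2 * (m+4) + 2 by ring, show m + 6 - 2 = m + 4 by omega]
      exact (u_even_step (m+4)).symm
    · rw [show m + 2 + 1 = m + 3 from rfl, key 2 (by omega), key 3 (by omega),
        show m + 6 - 2 = (m+3) + 1 by omega,
        show (2:ℕ) * ((m+3)+1) = 2 * (m+3) + 2 by ring, show m + 6 - 3 = m + 3 by omega]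
      exact (u_even_step (m+3)).symm
  · -- i = 2m+1 : j = 2t : u(i+2t) = u(m+t) ; = u(i+13-2t) = u(2(m+7-t))
    have key : ∀ t, t < 4 → paperfolding (m + t) = paperfolding (2 * (m + 7 - t)) := by
      intro t ht
      have h1 := h (2*t) (by omega)
      rw [show i + 2*t = 2 * (m + t) + 1 by omega, u_odd,
        show i + (14 - 1 - 2*t) = 2 * (m + 7 - t) by omega] at h1
      exact h1
    apply no_alt4 m
    refine ⟨?_, ?_, ?_⟩
    · have k0 := key 0 (by omega)
      rw [Nat.add_zero] at k0
      rw [k0, key 1 (by omega), show m + 7 - 0 = (m+6) + 1 by omega,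
        show (2:ℕ) * ((m+6)+1) = 2 * (m+6) + 2 by ring, show m + 7 - 1 = m + 6 by omega]
      exact (u_even_step (m+6)).symm
    · rw [show m + 1 + 1 = m + 2 from rfl, key 1 (by omega), key 2 (by omega),
        show m + 7 - 1 = (m+5) + 1 by omega,
        show (2:ℕ) * ((m+5)+1) = 2 * (m+5) + 2 by ring, show m + 7 - 2 = m + 5 by omega]
      exact (u_even_step (m+5)).symm
    · rw [show m + 2 + 1 = m + 3 from rfl, key 2 (by omega), key 3 (by omega),
        show m + 7 - 2 = (m+4) + 1 by omega,
        show (2:ℕ) * ((m+4)+1) = 2 * (m+4) + 2 by ring, show m + 7 - 3 = m + 4 by omega]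
      exact (u_even_step (m+4)).symm

lemma no_pal15 (i : ℕ) : ¬ PalFac i 15 := by
  intro h
  rcases Nat.even_or_odd i with ⟨m, hm⟩ | ⟨m, hm⟩
  · -- i = 2m : j = 0 : u(2m) = u(2m+14) = u(2(m+7))
    have h1 := h 0 (by omega)
    rw [show i + 0 = 2 * m by omega, show i + (15 - 1 - 0) = 2 * (m + 7) by omega] at h1
    rw [u_even_val, u_even_val] at h1
    rcases (by omega : m % 2 = 0 ∨ m % 2 = 1) with hp | hp
    · rw [if_pos hp, if_neg (by omega : ¬ (m+7) % 2 = 0)] at h1; exact absurd h1 (by decide)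
    · rw [if_neg (by omega : ¬ m % 2 = 0), if_pos (by omega : (m+7) % 2 = 0)] at h1
      exact absurd h1 (by decide)
  · -- i = 2m+1 : odd positions give PalFac m 8
    apply no_pal8 m
    intro j hj
    have h1 := h (2*j) (by omega)
    rw [show i + 2*j = 2 * (m + j) + 1 by omega, u_odd,
      show i + (15 - 1 - 2*j) = 2 * (m + (8 - 1 - j)) + 1 by omega, u_odd] at h1
    exact h1

lemma palfac_shrink {i ℓ : ℕ} (h2 : 2 ≤ ℓ) (h : PalFac i ℓ) : PalFac (i+1) (ℓ-2) := by
  intro j hj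
  have h1 := h (j+1) (by omega)
  rw [show i + (j+1) = i + 1 + j by omega,
    show i + (ℓ - 1 - (j+1)) = i + 1 + (ℓ - 2 - 1 - j) by omega] at h1
  exact h1

lemma pal_le13 : ∀ ℓ i, PalFac i ℓ → ℓ ≤ 13 := by
  intro ℓ
  induction ℓ using Nat.strong_induction_on with
  | _ ℓ ih =>
    intro i h
    by_contra hgt
    push_neg at hgt
    rcases (by omega : ℓ = 14 ∨ ℓ = 15 ∨ 16 ≤ ℓ) with rfl | rfl | h16
    · exact no_pal14 i h
    · exact no_pal15 i h
    · have := ih (ℓ - 2) (by omega) (i+1) (palfac_shrink (by omega) h)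
      omega

end Sec2

section Sec3

variable {α : Type*} [LinearOrder α]

lemma foldr_min_le_init (l : List α) (b : α) : l.foldr min b ≤ b := by
  induction l with
  | nil => simp
  | cons a l ih => exact le_trans (min_le_right _ _) ih

lemma foldr_min_le_mem {l : List α} {a : α} (h : a ∈ l) (b : α) : l.foldr min b ≤ a := by
  induction l with
  | nil => simp at h
  | cons x l ih =>
    rcases List.mem_cons.mp h with rfl | h
    · exact min_le_left _ _
    · exact le_trans (min_le_right _ _) (ih h)

lemma le_foldr_min {l : List α} {b c : α} (hb : c ≤ b) (h : ∀ a ∈ l, c ≤ a) :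
    c ≤ l.foldr min b := by
  induction l with
  | nil => simpa
  | cons x l ih =>
    exact le_min (h x (by simp)) (ih (fun a ha => h a (List.mem_cons_of_mem _ ha)))

lemma foldr_min_mem (l : List α) (b : α) : l.foldr min b = b ∨ l.foldr min b ∈ l := by
  induction l with
  | nil => left; rfl
  | cons x l ih =>
    have hfold : List.foldr min b (x :: l) = min x (l.foldr min b) := rfl
    rcases le_or_gt x (l.foldr min b) with h | h
    · right; rw [hfold, min_eq_left h]; simp
    · rw [hfold, min_eq_right h.le]
      rcases ih with h1 | h1
      · left; exact h1
      · right; exact List.mem_cons_of_mem _ h1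

/-- The DP computing the prefix palindromic length with window 13. -/
def fDP : ℕ → ℕ
  | 0 => 0
  | n + 1 =>
    1 + ((List.range 13).filterMap (fun t =>
      if t + 1 ≤ n + 1 ∧ PalFac (n - t) (t + 1) then some (fDP (n - t)) else none)).foldr
      min (fDP n)
termination_by n => n
decreasing_by all_goals omega

lemma palfac_one (n : ℕ) : PalFac n 1 := by
  intro j hj
  interval_cases j
  rfl

lemma fDP_succ_le {n ℓ : ℕ} (h1 : 1 ≤ ℓ) (h13 : ℓ ≤ 13) (hn : ℓ ≤ n + 1)
    (hp : PalFac (n + 1 - ℓ) ℓ) : fDP (n + 1) ≤ fDP (n + 1 - ℓ) + 1 := by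
  rw [fDP]
  have hmem : fDP (n + 1 - ℓ) ∈ (List.range 13).filterMap (fun t =>
      if t + 1 ≤ n + 1 ∧ PalFac (n - t) (t + 1) then some (fDP (n - t)) else none) := by
    rw [List.mem_filterMap]
    refine ⟨ℓ - 1, List.mem_range.mpr (by omega), ?_⟩
    have hp' : PalFac (n - (ℓ - 1)) (ℓ - 1 + 1) := by
      rw [show n - (ℓ - 1) = n + 1 - ℓ by omega, show ℓ - 1 + 1 = ℓ by omega]
      exact hp
    rw [if_pos ⟨by omega, hp'⟩, show n - (ℓ - 1) = n + 1 - ℓ by omega]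
  have := foldr_min_le_mem hmem (fDP n)
  omega

lemma fDP_succ_exists (n : ℕ) : ∃ ℓ, 1 ≤ ℓ ∧ ℓ ≤ 13 ∧ ℓ ≤ n + 1 ∧ PalFac (n + 1 - ℓ) ℓ ∧
    fDP (n + 1) = fDP (n + 1 - ℓ) + 1 := by
  rw [fDP]
  rcases foldr_min_mem ((List.range 13).filterMap (fun t =>
      if t + 1 ≤ n + 1 ∧ PalFac (n - t) (t + 1) then some (fDP (n - t)) else none)) (fDP n)
    with h | h
  · exact ⟨1, le_refl _, by omega, by omega, by simpa using palfac_one n, by rw [show n + 1 - 1 = n by omega]; omega⟩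
  · rw [List.mem_filterMap] at h
    obtain ⟨t, ht, heq⟩ := h
    rw [List.mem_range] at ht
    by_cases hc : t + 1 ≤ n + 1 ∧ PalFac (n - t) (t + 1)
    · rw [if_pos hc] at heq
      injection heq with heq
      refine ⟨t + 1, by omega, by omega, hc.1, ?_, ?_⟩
      · rw [show n + 1 - (t + 1) = n - t by omega]; exact hc.2
      · rw [show n + 1 - (t+1) = n - t by omega]
        omega
    · rw [if_neg hc] at heq
      exact absurd heq (by simp)

lemma fDP_le_succ (n : ℕ) : fDP (n + 1) ≤ fDP n + 1 := by
  have := fDP_succ_le (n := n) (ℓ := 1) (le_refl _) (by omega) (by omega)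
    (by simpa using palfac_one n)
  rw [show n + 1 - 1 = n by omega] at this
  exact this

lemma fDP_add_le (m t : ℕ) : fDP (m + t) ≤ fDP m + t := by
  induction t with
  | zero => simp
  | succ t ih =>
    have h2 := fDP_le_succ (m + t)
    rw [show m + (t + 1) = m + t + 1 by omega]
    omega

lemma fDP_sub_le : ∀ n, ∀ j ≤ 12, j ≤ n → fDP (n - j) ≤ fDP n + 12 := by
  intro n
  induction n using Nat.strong_induction_on with
  | _ n ih =>
    intro j hj12 hjn
    rcases Nat.eq_zero_or_pos j with rfl | hj
    · simp
    obtain ⟨m, rfl⟩ : ∃ m, n = m + 1 := ⟨n - 1, by omega⟩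
    obtain ⟨ℓ, h1, h13, hn, _, heq⟩ := fDP_succ_exists m
    rcases le_or_gt j ℓ with hle | hlt
    · have h2 : fDP (m + 1 - j) ≤ fDP (m + 1 - ℓ) + (ℓ - j) := by
        have := fDP_add_le (m + 1 - ℓ) (ℓ - j)
        rw [show m + 1 - ℓ + (ℓ - j) = m + 1 - j by omega] at this
        exact this
      omega
    · have h2 : fDP (m + 1 - ℓ - (j - ℓ)) ≤ fDP (m + 1 - ℓ) + 12 :=
        ih (m + 1 - ℓ) (by omega) (j - ℓ) (by omega) (by omega)
      rw [show m + 1 - ℓ - (j - ℓ) = m + 1 - j by omega] at h2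
      omega

end Sec3

section Sec4

variable {A : Type*}

lemma wordPrefix_length (u : ℕ → A) (n : ℕ) : (wordPrefix u n).length = n := by
  simp [wordPrefix]

lemma wordFactor_length (u : ℕ → A) (i ℓ : ℕ) : (wordFactor u i ℓ).length = ℓ := by
  simp [wordFactor]

lemma wordPrefix_append_factor (u : ℕ → A) (m t : ℕ) :
    wordPrefix u m ++ wordFactor u m t = wordPrefix u (m + t) := by
  apply List.ext_getElem
  · simp [wordPrefix, wordFactor]
  · intro n h1 h2
    rw [List.getElem_append]
    simp only [wordPrefix, wordFactor, List.length_ofFn] at h1 h2 ⊢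
    split_ifs with hn
    · rw [List.getElem_ofFn, List.getElem_ofFn]
    · rw [List.getElem_ofFn, List.getElem_ofFn]
      simp only []
      congr 1
      omega

lemma wordPrefix_take (u : ℕ → A) (n m : ℕ) (h : m ≤ n) :
    (wordPrefix u n).take m = wordPrefix u m := by
  apply List.ext_getElem
  · simp [wordPrefix]; omega
  · intro j h1 h2
    rw [List.getElem_take]
    simp [wordPrefix]

lemma wordPrefix_drop (u : ℕ → A) (n m : ℕ) (h : m ≤ n) :
    (wordPrefix u n).drop m = wordFactor u m (n - m) := by
  apply List.ext_getElem
  · simp [wordPrefix, wordFactor]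
  · intro j h1 h2
    rw [List.getElem_drop]
    simp only [wordPrefix, wordFactor]
    rw [List.getElem_ofFn, List.getElem_ofFn]

lemma palFac_iff_palindrome (i ℓ : ℕ) :
    IsPalindrome (wordFactor paperfolding i ℓ) ↔ PalFac i ℓ := by
  unfold IsPalindrome
  constructor
  · intro h j hj
    have h2 : (wordFactor paperfolding i ℓ).reverse[j]'(by simp [wordFactor]; omega)
        = (wordFactor paperfolding i ℓ)[j]'(by simp [wordFactor]; omega) :=
      List.getElem_of_eq h _
    rw [List.getElem_reverse] at h2
    simp only [wordFactor, List.length_ofFn] at h2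
    rw [List.getElem_ofFn, List.getElem_ofFn] at h2
    simpa using h2.symm
  · intro h
    apply List.ext_getElem
    · simp
    · intro j h1 h2
      rw [List.getElem_reverse]
      simp only [wordFactor, List.length_ofFn] at h1 h2 ⊢
      rw [List.getElem_ofFn, List.getElem_ofFn]
      simp only []
      exact (h j (by simpa [wordFactor] using h2)).symm

lemma palConcat_fDP : ∀ n, IsPalConcat (wordPrefix paperfolding n) (fDP n) := by
  intro n
  induction n using Nat.strong_induction_on with
  | _ n ih =>
    rcases Nat.eq_zero_or_pos n with rfl | hn
    · exact ⟨[], by simp [fDP], by simp, by simp [wordPrefix]⟩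
    obtain ⟨m, rfl⟩ : ∃ m, n = m + 1 := ⟨n - 1, by omega⟩
    obtain ⟨ℓ, h1, h13, hm, hp, heq⟩ := fDP_succ_exists m
    obtain ⟨ps, hlen, hprops, hflat⟩ := ih (m + 1 - ℓ) (by omega)
    refine ⟨ps ++ [wordFactor paperfolding (m + 1 - ℓ) ℓ], ?_, ?_, ?_⟩
    · simp [hlen, heq]
    · intro p hp2
      rcases List.mem_append.mp hp2 with h | h
      · exact hprops p h
      · rcases List.mem_singleton.mp h with rfl
        refine ⟨?_, (palFac_iff_palindrome _ _).mpr hp⟩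
        intro hnil
        have := congrArg List.length hnil
        simp [wordFactor] at this
        omega
    · rw [List.flatten_append, hflat]
      simp only [List.flatten, List.append_eq, List.append_nil]
      rw [wordPrefix_append_factor]
      congr 1
      omega

lemma fDP_le_palConcat : ∀ n k, IsPalConcat (wordPrefix paperfolding n) k → fDP n ≤ k := by
  intro n
  induction n using Nat.strong_induction_on with
  | _ n ih =>
    intro k ⟨ps, hlen, hprops, hflat⟩
    rcases Nat.eq_zero_or_pos n with rfl | hn
    · simp [fDP]
    rcases List.eq_nil_or_concat ps with rfl | ⟨qs, p, rfl⟩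
    · exfalso
      have := congrArg List.length hflat
      simp [wordPrefix_length] at this
      omega
    rw [List.concat_eq_append] at hlen hprops hflat
    have hpne : p ≠ [] := (hprops p (by simp)).1
    have hppal : IsPalindrome p := (hprops p (by simp)).2
    set ℓ := p.length with hℓ
    have hℓ1 : 1 ≤ ℓ := by
      rcases p with _ | ⟨a, p⟩
      · exact absurd rfl hpne
      · simp [hℓ]
    have hflatlen : qs.flatten.length + ℓ = n := by
      have h0 := congrArg List.length hflat
      rw [List.flatten_append] at h0
      simp only [List.length_append, wordPrefix_length] at h0
      have h1 : ([p] : List (List (Fin 2))).flatten.length = ℓ := by simp [hℓ]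
      omega
    have hℓn : ℓ ≤ n := by omega
    have hq : qs.flatten = wordPrefix paperfolding (n - ℓ) := by
      rw [← wordPrefix_take paperfolding n (n - ℓ) (by omega), ← hflat, List.flatten_append,
        List.take_append_of_le_length (by omega), List.take_of_length_le (by omega)]
    have hpfac : p = wordFactor paperfolding (n - ℓ) ℓ := by
      have h2 : (wordPrefix paperfolding n).drop (n - ℓ) = wordFactor paperfolding (n - ℓ) ℓ := by
        rw [wordPrefix_drop _ _ _ (by omega), show n - (n - ℓ) = ℓ by omega]
      rw [← h2, ← hflat, List.flatten_append, List.drop_append_of_le_length (by omega),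
        List.drop_of_length_le (by omega)]
      simp
    have hpal : PalFac (n - ℓ) ℓ := by
      rw [hpfac] at hppal
      exact (palFac_iff_palindrome _ _).mp hppal
    have h13 : ℓ ≤ 13 := pal_le13 ℓ _ hpal
    have hih : fDP (n - ℓ) ≤ qs.length := by
      apply ih (n - ℓ) (by omega)
      exact ⟨qs, rfl, fun q hq2 => hprops q (List.mem_append_left _ hq2), hq⟩
    have hstep : fDP n ≤ fDP (n - ℓ) + 1 := by
      obtain ⟨m, rfl⟩ : ∃ m, n = m + 1 := ⟨n - 1, by omega⟩
      exact fDP_succ_le hℓ1 h13 (by omega) (by rw [show m + 1 - ℓ = m + 1 - ℓ from rfl]; exact hpal)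
    have hk : qs.length + 1 = k := by simpa using hlen
    omega

lemma PPL_eq_fDP (n : ℕ) : PPL paperfolding n = fDP n := by
  unfold PPL
  apply le_antisymm
  · exact Nat.sInf_le (palConcat_fDP n)
  · have hne : {k | IsPalConcat (wordPrefix paperfolding n) k}.Nonempty :=
      ⟨fDP n, palConcat_fDP n⟩
    exact fDP_le_palConcat n _ (Nat.sInf_mem hne)

end Sec4

section Sec5

def emb2 (a : Fin 2) : Fin 3 := ⟨a.val, by omega⟩

lemma emb2_inj {a b : Fin 2} (h : emb2 a = emb2 b) : a = b := by
  fin_cases a <;> fin_cases b <;> simp_all [emb2]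

lemma emb2_ne_two (a : Fin 2) : emb2 a ≠ 2 := by
  fin_cases a <;> simp [emb2] <;> decide

def clampZ (z : ℤ) : Fin 25 := ⟨(max 0 (min 24 z)).toNat, by omega⟩

lemma clampZ_coe {z : ℤ} (h0 : 0 ≤ z) (h24 : z ≤ 24) : ((clampZ z : Fin 25) : ℤ) = z := by
  simp only [clampZ]
  omega

/-- The state space of the palindromic-length transducer. -/
abbrev QS := (Fin 12 → Fin 3) × (Fin 12 → Fin 25)

/-- The state reached after reading `u[0..n-1]`. -/
def stateS (n : ℕ) : QS :=
  (fun j => if (j : ℕ) < n then emb2 (paperfolding (n - 1 - j)) else 2,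
   fun j => if (j : ℕ) + 1 ≤ n then clampZ ((fDP n : ℤ) - fDP (n - ((j : ℕ) + 1)) + 12)
            else ⟨24, by omega⟩)

/-- Extended window: `wext q a i` represents `u (n - i)` after seeing letter `a = u n`. -/
def wext (q : QS) (a : Fin 2) (i : ℕ) : Fin 3 :=
  if i = 0 then emb2 a else if h : i - 1 < 12 then q.1 ⟨i - 1, h⟩ else 2

/-- Relative DP values : `etil q k` represents `fDP n - fDP (n - k)`. -/
def etil (q : QS) (k : ℕ) : ℤ :=
  if k = 0 then 0 else if h : k - 1 < 12 then (q.2 ⟨k - 1, h⟩ : ℤ) - 12 else 0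

def palW (q : QS) (a : Fin 2) (ℓ : ℕ) : Prop :=
  ∀ i, i < ℓ → wext q a i = wext q a (ℓ - 1 - i)

instance (q : QS) (a : Fin 2) (ℓ : ℕ) : Decidable (palW q a ℓ) := Nat.decidableBallLT ℓ _

def dOut (q : QS) (a : Fin 2) : ℤ :=
  1 + ((List.range 13).filterMap
    (fun t => if palW q a (t + 1) then some (- etil q t) else none)).foldr min 0

def stepQ (q : QS) (a : Fin 2) : QS :=
  (fun j => wext q a j,
   fun j => if hj : (j : ℕ) = 0 then clampZ (dOut q a + 12)
            else if q.1 ⟨(j : ℕ) - 1, by omega⟩ ≠ 2 then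
              clampZ (dOut q a + (q.2 ⟨(j : ℕ) - 1, by omega⟩ : ℤ))
            else ⟨24, by omega⟩)

lemma stateS_w (n k : ℕ) (h : k < 12) :
    (stateS n).1 ⟨k, h⟩ = if k < n then emb2 (paperfolding (n - 1 - k)) else 2 := rfl

lemma stateS_p (n k : ℕ) (h : k < 12) :
    (stateS n).2 ⟨k, h⟩ = if k + 1 ≤ n then clampZ ((fDP n : ℤ) - fDP (n - (k + 1)) + 12)
      else ⟨24, by omega⟩ := rfl

lemma wext_real (n : ℕ) (i : ℕ) (hi : i ≤ n) (h12 : i ≤ 12) :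
    wext (stateS n) (paperfolding n) i = emb2 (paperfolding (n - i)) := by
  unfold wext
  rcases Nat.eq_zero_or_pos i with rfl | hpos
  · simp
  · rw [if_neg (by omega), dif_pos (by omega : i - 1 < 12), stateS_w,
      if_pos (by omega : i - 1 < n)]
    congr 2
    omega

lemma wext_sentinel (n : ℕ) (i : ℕ) (hi : n < i) (h12 : i ≤ 12) :
    wext (stateS n) (paperfolding n) i = 2 := by
  unfold wext
  rw [if_neg (by omega), dif_pos (by omega : i - 1 < 12), stateS_w,
    if_neg (by omega : ¬ (i - 1 < n))]

lemma etil_real (n k : ℕ) (hk : k ≤ 12) (hkn : k ≤ n) :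
    etil (stateS n) k = (fDP n : ℤ) - fDP (n - k) := by
  unfold etil
  rcases Nat.eq_zero_or_pos k with rfl | hpos
  · simp
  · rw [if_neg (by omega), dif_pos (by omega : k - 1 < 12), stateS_p,
      if_pos (by omega : k - 1 + 1 ≤ n)]
    have hup : (fDP n : ℤ) - fDP (n - (k - 1 + 1)) + 12 ≤ 24 := by
      have := fDP_add_le (n - (k - 1 + 1)) (k - 1 + 1)
      rw [show n - (k - 1 + 1) + (k - 1 + 1) = n by omega] at this
      omega
    have hlo : 0 ≤ (fDP n : ℤ) - fDP (n - (k - 1 + 1)) + 12 := by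
      have := fDP_sub_le n (k - 1 + 1) (by omega) (by omega)
      omega
    rw [clampZ_coe hlo hup]
    rw [show k - 1 + 1 = k by omega]
    ring

lemma palW_iff (n t : ℕ) (ht : t ≤ 12) (htn : t ≤ n) :
    palW (stateS n) (paperfolding n) (t + 1) ↔ PalFac (n - t) (t + 1) := by
  constructor
  · intro h j hj
    have h1 := h (t - j) (by omega)
    rw [wext_real n _ (by omega) (by omega), wext_real n _ (by omega) (by omega)] at h1
    have h2 := emb2_inj h1
    rw [show n - (t - j) = n - t + j by omega,
      show n - (t + 1 - 1 - (t - j)) = n - t + (t + 1 - 1 - j) by omega] at h2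
    exact h2
  · intro h i hi
    rw [wext_real n _ (by omega) (by omega), wext_real n _ (by omega) (by omega)]
    congr 1
    have h2 := h (t - i) (by omega)
    rw [show n - t + (t - i) = n - i by omega,
      show n - t + (t + 1 - 1 - (t - i)) = n - (t + 1 - 1 - i) by omega] at h2
    exact h2

lemma palW_false (n t : ℕ) (ht : t ≤ 12) (htn : n < t) :
    ¬ palW (stateS n) (paperfolding n) (t + 1) := by
  intro h
  have h1 := h 0 (by omega)
  rw [wext_real n 0 (by omega) (by omega), show t + 1 - 1 - 0 = t by omega,
    wext_sentinel n t htn ht] at h1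
  exact emb2_ne_two _ h1

/-- The key correctness lemma for the transducer output. -/
lemma dOut_correct (n : ℕ) : (fDP (n + 1) : ℤ) = fDP n + dOut (stateS n) (paperfolding n) := by
  have hbound : (fDP (n + 1) : ℤ) - fDP n - 1 ≤ 0 := by
    have := fDP_le_succ n
    omega
  have key : ((List.range 13).filterMap
      (fun t => if palW (stateS n) (paperfolding n) (t + 1) then
        some (- etil (stateS n) t) else none)).foldr min 0
      = (fDP (n + 1) : ℤ) - fDP n - 1 := by
    apply le_antisymm
    · obtain ⟨ℓ, h1, h13, hn, hp, heq⟩ := fDP_succ_exists n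
      have hmem : (fDP (n + 1) : ℤ) - fDP n - 1 ∈ (List.range 13).filterMap
          (fun t => if palW (stateS n) (paperfolding n) (t + 1) then
            some (- etil (stateS n) t) else none) := by
        rw [List.mem_filterMap]
        refine ⟨ℓ - 1, List.mem_range.mpr (by omega), ?_⟩
        have hpal : PalFac (n - (ℓ - 1)) (ℓ - 1 + 1) := by
          rw [show n - (ℓ - 1) = n + 1 - ℓ by omega, show ℓ - 1 + 1 = ℓ by omega]
          exact hp
        rw [if_pos ((palW_iff n (ℓ - 1) (by omega) (by omega)).mpr hpal)]
        rw [etil_real n (ℓ - 1) (by omega) (by omega)]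
        congr 1
        rw [show n - (ℓ - 1) = n + 1 - ℓ by omega]
        omega
      exact foldr_min_le_mem hmem 0
    · apply le_foldr_min hbound
      intro a ha
      rw [List.mem_filterMap] at ha
      obtain ⟨t, ht, heq⟩ := ha
      rw [List.mem_range] at ht
      by_cases hpw : palW (stateS n) (paperfolding n) (t + 1)
      · rw [if_pos hpw] at heq
        injection heq with heq
        rcases le_or_gt t n with htn | htn
        · have hpal := (palW_iff n t (by omega) htn).mp hpw
          have hle : fDP (n + 1) ≤ fDP (n + 1 - (t + 1)) + 1 :=
            fDP_succ_le (by omega) (by omega) (by omega)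
              (by rw [show n + 1 - (t + 1) = n - t by omega]; exact hpal)
          rw [etil_real n t (by omega) htn] at heq
          rw [show n + 1 - (t + 1) = n - t by omega] at hle
          omega
        · exact absurd hpw (palW_false n t (by omega) htn)
      · rw [if_neg hpw] at heq
        exact absurd heq (by simp)
  unfold dOut
  rw [key]
  ring

lemma fin2_cases (a : Fin 2) : a = paperfolding 0 ∨ True := Or.inr trivial

/-- The state evolves by the transducer transition. -/
lemma step_correct (n : ℕ) : stateS (n + 1) = stepQ (stateS n) (paperfolding n) := by
  have hd := dOut_correct n
  refine Prod.ext ?_ ?_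
  · funext j
    rcases j with ⟨k, hk⟩
    show (stateS (n+1)).1 ⟨k, hk⟩ = wext (stateS n) (paperfolding n) k
    rw [stateS_w]
    rcases Nat.eq_zero_or_pos k with rfl | hpos
    · rw [if_pos (show 0 < n + 1 by omega)]
      unfold wext
      rw [if_pos rfl]
      rfl
    · by_cases hkn : k < n + 1
      · rw [if_pos hkn]
        unfold wext
        rw [if_neg (show ¬ k = 0 by omega), dif_pos (show k - 1 < 12 by omega), stateS_w,
          if_pos (show k - 1 < n by omega)]
        congr 2
        omega
      · rw [if_neg hkn]
        unfold wext
        rw [if_neg (show ¬ k = 0 by omega), dif_pos (show k - 1 < 12 by omega), stateS_w,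
          if_neg (show ¬ (k - 1 < n) by omega)]
  · funext j
    rcases j with ⟨k, hk⟩
    show (stateS (n+1)).2 ⟨k, hk⟩ = (stepQ (stateS n) (paperfolding n)).2 ⟨k, hk⟩
    have hstep : (stepQ (stateS n) (paperfolding n)).2 ⟨k, hk⟩
        = if hj : k = 0 then clampZ (dOut (stateS n) (paperfolding n) + 12)
          else if (stateS n).1 ⟨k - 1, by omega⟩ ≠ 2 then
            clampZ (dOut (stateS n) (paperfolding n) + ((stateS n).2 ⟨k - 1, by omega⟩ : ℤ))
          else ⟨24, by omega⟩ := rfl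
    rw [hstep, stateS_p]
    rcases Nat.eq_zero_or_pos k with rfl | hpos
    · rw [dif_pos rfl, if_pos (by omega)]
      congr 1
      rw [show n + 1 - (0 + 1) = n by omega]
      omega
    · rw [dif_neg (by omega)]
      by_cases hkn : k ≤ n
      · have hw : (stateS n).1 ⟨k - 1, by omega⟩ ≠ 2 := by
          rw [stateS_w, if_pos (by omega : k - 1 < n)]
          exact emb2_ne_two _
        rw [if_pos hw, if_pos (by omega : k + 1 ≤ n + 1)]
        have hcoe : (((stateS n).2 ⟨k - 1, by omega⟩ : Fin 25) : ℤ)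
            = (fDP n : ℤ) - fDP (n - k) + 12 := by
          rw [stateS_p, if_pos (by omega : k - 1 + 1 ≤ n)]
          have hup : (fDP n : ℤ) - fDP (n - (k - 1 + 1)) + 12 ≤ 24 := by
            have := fDP_add_le (n - (k - 1 + 1)) (k - 1 + 1)
            rw [show n - (k - 1 + 1) + (k - 1 + 1) = n by omega] at this
            omega
          have hlo : 0 ≤ (fDP n : ℤ) - fDP (n - (k - 1 + 1)) + 12 := by
            have := fDP_sub_le n (k - 1 + 1) (by omega) (by omega)
            omega
          rw [clampZ_coe hlo hup, show k - 1 + 1 = k by omega]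
        rw [hcoe]
        congr 1
        rw [show n + 1 - (k + 1) = n - k by omega]
        omega
      · have hw : ¬ ((stateS n).1 ⟨k - 1, by omega⟩ ≠ 2) := by
          rw [stateS_w, if_neg (by omega : ¬ (k - 1 < n))]
          simp
        rw [if_neg hw, if_neg (by omega : ¬ (k + 1 ≤ n + 1))]

/-- Reading off the PPL difference from the state. -/
def outQ (q : QS) : ℤ := ((q.2 ⟨0, by omega⟩ : Fin 25) : ℤ) - 12

lemma outQ_stateS (m : ℕ) : outQ (stateS (m + 1)) = (fDP (m + 1) : ℤ) - fDP m := by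
  unfold outQ
  simp only [stateS]
  rw [if_pos (by omega)]
  have hup : (fDP (m + 1) : ℤ) - fDP (m + 1 - (0 + 1)) + 12 ≤ 24 := by
    have := fDP_le_succ m
    simp only [show m + 1 - (0 + 1) = m by omega]
    omega
  have hlo : 0 ≤ (fDP (m + 1) : ℤ) - fDP (m + 1 - (0 + 1)) + 12 := by
    have := fDP_sub_le (m + 1) 1 (by omega) (by omega)
    simp only [show m + 1 - (0 + 1) = m by omega, show m + 1 - 1 = m by omega] at *
    omega
  rw [clampZ_coe hlo hup]
  rw [show m + 1 - (0 + 1) = m by omega]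
  ring

lemma PPLdiff_eq_outQ (m : ℕ) : PPLdiff paperfolding m = outQ (stateS (m + 1)) := by
  unfold PPLdiff
  rw [PPL_eq_fDP, PPL_eq_fDP, outQ_stateS]

end Sec5

section Sec6

def c1PF (x : Fin 4) : Fin 2 := codingPF (phiPF x).1
def c2PF (x : Fin 4) : Fin 2 := codingPF (phiPF x).2

lemma u_2k (k : ℕ) : paperfolding (2 * k) = c1PF (vPF k) := by
  unfold paperfolding c1PF
  rw [vPF_even]

lemma u_2k1 (k : ℕ) : paperfolding (2 * k + 1) = c2PF (vPF k) := by
  unfold paperfolding c2PF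
  rw [vPF_odd]

def hQ (x : Fin 4) (q : QS) : QS := stepQ (stepQ q (c1PF x)) (c2PF x)

def famStep (H : Fin 4 → QS → QS) : Fin 4 → QS → QS :=
  fun x => H (phiPF x).2 ∘ H (phiPF x).1

def prodH (H : Fin 4 → QS → QS) : ℕ → QS → QS
  | 0 => id
  | n + 1 => H (vPF n) ∘ prodH H n

lemma stateS_two (k : ℕ) : stateS (2 * k + 2) = hQ (vPF k) (stateS (2 * k)) := by
  unfold hQ
  rw [show 2 * k + 2 = (2 * k + 1) + 1 from rfl, step_correct (2 * k + 1), step_correct (2 * k),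
    u_2k, u_2k1]

lemma prodH_state : ∀ n, prodH hQ n (stateS 0) = stateS (2 * n) := by
  intro n
  induction n with
  | zero => rw [show 2 * 0 = 0 from rfl]; rfl
  | succ n ih =>
    show hQ (vPF n) (prodH hQ n (stateS 0)) = _
    rw [ih, show 2 * (n + 1) = 2 * n + 2 by ring, stateS_two]

lemma prodH_double (H : Fin 4 → QS → QS) : ∀ n, prodH (famStep H) n = prodH H (2 * n) := by
  intro n
  induction n with
  | zero => rw [show 2 * 0 = 0 from rfl]; rfl
  | succ n ih =>
    show famStep H (vPF n) ∘ prodH (famStep H) n = _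
    rw [ih, show 2 * (n + 1) = (2 * n + 1) + 1 by ring]
    show _ = prodH H ((2 * n + 1) + 1)
    rw [prodH, prodH, vPF_odd, vPF_even]
    rfl

lemma kernel_form (e : ℕ) (he : 1 ≤ e) : ∀ c ≤ 2 ^ e, ∃ H g : Fin 4 → QS → QS,
    ∀ n, stateS (2 ^ e * n + c) = g (vPF n) (prodH H n (stateS 0)) := by
  induction e, he using Nat.le_induction with
  | base =>
    intro c hc
    interval_cases c
    · exact ⟨hQ, fun _ => id, fun n => by
        rw [show 2 ^ 1 * n + 0 = 2 * n by ring, ← prodH_state]; rfl⟩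
    · refine ⟨hQ, fun x q => stepQ q (c1PF x), fun n => ?_⟩
      rw [show 2 ^ 1 * n + 1 = (2 * n) + 1 by ring, step_correct (2 * n), u_2k, prodH_state]
    · refine ⟨hQ, hQ, fun n => ?_⟩
      rw [show 2 ^ 1 * n + 2 = 2 * n + 2 by ring, stateS_two, prodH_state]
  | succ e he ih =>
    intro c hc
    rcases le_or_gt c (2 ^ e) with h | h
    · obtain ⟨H, g, hg⟩ := ih c h
      refine ⟨famStep H, fun x => g (phiPF x).1, fun n => ?_⟩
      have h2 := hg (2 * n)
      rw [show 2 ^ e * (2 * n) + c = 2 ^ (e + 1) * n + c by ring] at h2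
      rw [h2, vPF_even, prodH_double]
    · obtain ⟨H, g, hg⟩ := ih (c - 2 ^ e) (by omega)
      refine ⟨famStep H, fun x => g (phiPF x).2 ∘ H (phiPF x).1, fun n => ?_⟩
      have h2 := hg (2 * n + 1)
      rw [show 2 ^ e * (2 * n + 1) + (c - 2 ^ e) = 2 ^ (e + 1) * n + c by
        have h3 : 2 ^ e * (2 * n + 1) = 2 ^ e * 2 * n + 2 ^ e := by ring
        have h4 : 2 ^ (e + 1) * n = 2 ^ e * 2 * n := by rw [pow_succ]
        omega] at h2
      rw [h2, vPF_odd, prodH, vPF_even, prodH_double]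
      rfl

end Sec6

/-- The PPL-difference sequence of the paperfolding word is 2-automatic:
its 2-kernel is finite. -/
theorem paperfolding_ppl_diff_automatic :
    (kernelSeq 2 (PPLdiff paperfolding)).Finite := by
  set Ψ : ((Fin 4 → QS → QS) × (Fin 4 → QS → QS)) → (ℕ → ℤ) :=
    fun p => fun n => outQ (p.2 (vPF n) (prodH p.1 n (stateS 0))) with hΨ
  have hsub : kernelSeq 2 (PPLdiff paperfolding) ⊆
      insert (PPLdiff paperfolding) (Set.range Ψ) := by
    rintro y ⟨e, b, hb, rfl⟩
    rcases Nat.eq_zero_or_pos e with rfl | he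
    · left
      have hb0 : b = 0 := by simpa using hb
      subst hb0
      funext n
      norm_num
    · right
      obtain ⟨H, g, hg⟩ := kernel_form e he (b + 1) (by omega)
      refine ⟨(H, g), ?_⟩
      rw [hΨ]
      funext n
      simp only []
      rw [← hg n, show 2 ^ e * n + (b + 1) = (2 ^ e * n + b) + 1 by ring,
        ← PPLdiff_eq_outQ]
  exact Set.Finite.subset (Set.Finite.insert _ (Set.finite_range Ψ)) hsub
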